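/- Let λ₀ ≤ λ₁ ≤ … ≤ λₙ be positive integers with gcd 1 and h := Σᵢ λᵢ, and suppose P = conv(ρ₀,…,ρₙ) ⊂ ℤⁿ is a simplex with Σᵢ λᵢρᵢ = 0 such that the only lattice points of P are its vertices and the origin (the 'terminal' condition). Then for every k ∈ {2,…,n}: λ_k/h < 1/(n−k+2) (strict inequality). -/

import Mathlib

/-- The real vector associated to an integer vector. -/
def coeVec {n : ℕ} (v : Fin n → ℤ) : Fin n → ℝ := fun j => (v j : ℝ)

/-- **Strict upper bound on the weights of a terminal fake weighted projective space.**
Let λ₀ ≤ λ₁ ≤ … ≤ λₙ be positive integers with gcd 1, h = Σλᵢ, and let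
P = conv(ρ₀,…,ρₙ) be a simplex with primitive vertices in ℤⁿ satisfying Σλᵢρᵢ = 0,
whose only lattice points are its vertices and the origin (the terminal condition).
Then for every k with 2 ≤ k ≤ n, λ_k/h < 1/(n−k+2). -/
theorem terminal_weight_bound (n : ℕ) (ρ : Fin (n + 1) → Fin n → ℤ)
    (lam : Fin (n + 1) → ℤ) (hpos : ∀ i, 0 < lam i) (hmono : Monotone lam)
    (hgcd : Finset.univ.gcd lam = 1)
    (hprim : ∀ i, Finset.univ.gcd (ρ i) = 1)
    (hrel : ∑ i, lam i • ρ i = 0)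
    (haff : AffineIndependent ℝ (fun i => coeVec (ρ i)))
    (P : Set (Fin n → ℝ))
    (hP : P = convexHull ℝ (Set.range fun i => coeVec (ρ i)))
    (h0 : (0 : Fin n → ℝ) ∈ interior P)
    (hterm : ∀ x : Fin n → ℤ, coeVec x ∈ P → x = 0 ∨ ∃ i, x = ρ i) :
    ∀ k : Fin (n + 1), 2 ≤ k.val →
      (lam k : ℝ) / (∑ i, (lam i : ℝ)) < 1 / ((n : ℝ) - (k.val : ℝ) + 2) := by
  intro k hk2
  have hKn : k.val ≤ n := Nat.lt_succ_iff.mp k.isLt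
  have hn2 : 2 ≤ n := le_trans hk2 hKn
  set h : ℝ := ∑ i, (lam i : ℝ) with hh
  have hpos' : ∀ i, (0:ℝ) < lam i := fun i => by exact_mod_cast hpos i
  have hh0 : 0 < h := Finset.sum_pos (fun i _ => hpos' i) ⟨k, Finset.mem_univ k⟩
  set M : ℝ := (n:ℝ) - (k.val:ℝ) + 2 with hM
  have hKnR : (k.val : ℝ) ≤ (n:ℝ) := by exact_mod_cast hKn
  have hM0 : 0 < M := by rw [hM]; linarith
  by_contra hcon
  push_neg at hcon
  -- hcon : 1 / M ≤ lam k / h, hence h ≤ M * lam k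
  have hle : h ≤ M * (lam k : ℝ) := by
    rw [div_le_div_iff₀ hM0 hh0] at hcon; linarith
  set S : Finset (Fin (n+1)) := Finset.Ici k with hS
  have hcard : (S.card : ℝ) = (n:ℝ) - (k.val:ℝ) + 1 := by
    rw [hS, Fin.card_Ici, Nat.cast_sub (by omega)]
    push_cast; ring
  -- the convex weights
  set w : Fin (n+1) → ℝ := fun i => M * (lam i : ℝ) / h - (if i ∈ S then 1 else 0) with hw
  have hwnn : ∀ i ∈ Finset.univ, 0 ≤ w i := by
    intro i _
    rw [hw]
    by_cases hi : i ∈ S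
    · simp only [hi, if_pos]
      have hki : lam k ≤ lam i := hmono (Finset.mem_Ici.mp hi)
      have hkiR : (lam k : ℝ) ≤ (lam i : ℝ) := by exact_mod_cast hki
      have : h ≤ M * (lam i : ℝ) := le_trans hle (by nlinarith)
      rw [sub_nonneg, le_div_iff₀ hh0]; linarith
    · simp only [hi, if_neg, not_false_iff, sub_zero]
      exact div_nonneg (mul_nonneg hM0.le (hpos' i).le) hh0.le
  have hsum_ite : ∀ (f : Fin (n+1) → ℝ),
      ∑ i, (if i ∈ S then f i else 0) = ∑ i ∈ S, f i := by
    intro f; rw [Finset.sum_ite_mem, Finset.univ_inter]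
  have hsumw : ∑ i, w i = 1 := by
    rw [hw]
    rw [Finset.sum_sub_distrib, hsum_ite, Finset.sum_const, ← Finset.sum_div,
      ← Finset.mul_sum, ← hh, mul_div_assoc, div_self hh0.ne', mul_one,
      nsmul_eq_mul, mul_one]
    rw [hcard, hM]; ring
  -- coordinate-wise form of the relation
  have hrelj : ∀ j, ∑ i, (lam i : ℝ) * (ρ i j : ℝ) = 0 := by
    intro j
    have h1 := congrFun hrel j
    rw [Finset.sum_apply] at h1
    simp only [Pi.smul_apply, smul_eq_mul, Pi.zero_apply] at h1
    exact_mod_cast h1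
  -- the candidate lattice point
  set x : Fin n → ℤ := fun j => -∑ i ∈ S, ρ i j with hx
  have hxeq : ∑ i, w i • (fun i => coeVec (ρ i)) i = coeVec x := by
    funext j
    rw [Finset.sum_apply]
    simp only [Pi.smul_apply, smul_eq_mul, coeVec]
    have : ∑ i, w i * (ρ i j : ℝ)
        = ∑ i, (M * (lam i:ℝ) / h * (ρ i j:ℝ) - (if i ∈ S then (ρ i j:ℝ) else 0)) := by
      apply Finset.sum_congr rfl; intro i _
      by_cases hi : i ∈ S <;> simp [hw, hi] <;> ring
    rw [this, Finset.sum_sub_distrib, hsum_ite]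
    have h2 : ∑ i, M * (lam i:ℝ) / h * (ρ i j:ℝ)
        = (M / h) * ∑ i, (lam i : ℝ) * (ρ i j : ℝ) := by
      rw [Finset.mul_sum]; apply Finset.sum_congr rfl; intro i _; ring
    rw [h2, hrelj j, mul_zero, zero_sub, hx]
    push_cast; ring
  have hmem : coeVec x ∈ P := by
    rw [hP]
    have hmem' := Finset.centerMass_mem_convexHull (s := Set.range fun i => coeVec (ρ i))
      Finset.univ (w := w) hwnn (by rw [hsumw]; norm_num)
      (z := fun i => coeVec (ρ i)) (fun i _ => Set.mem_range_self i)
    rwa [Finset.centerMass_eq_of_sum_1 _ _ hsumw, hxeq] at hmem'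
  have haff' := affineIndependent_iff.mp haff
  rcases hterm x hmem with hx0 | ⟨t, ht⟩
  · -- case x = 0 : then ∑_{i ∈ S} ρ i = 0, contradicting affine independence
    have hSzero : ∀ j, ∑ i ∈ S, (ρ i j : ℝ) = 0 := by
      intro j
      have h1 := congrFun hx0 j
      rw [hx] at h1
      simp only [Pi.zero_apply, neg_eq_zero] at h1
      exact_mod_cast h1
    set u : Fin (n+1) → ℝ := fun i => (if i ∈ S then h else 0) - (S.card : ℝ) * lam i with hu
    have husum : ∑ i, u i = 0 := by
      rw [hu]
      rw [Finset.sum_sub_distrib, hsum_ite, Finset.sum_const, nsmul_eq_mul,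
        ← Finset.mul_sum, ← hh]
      ring
    have huvec : ∑ i, u i • (fun i => coeVec (ρ i)) i = 0 := by
      funext j
      rw [Finset.sum_apply]
      simp only [Pi.smul_apply, smul_eq_mul, coeVec, Pi.zero_apply]
      have : ∑ i, u i * (ρ i j : ℝ)
          = ∑ i, ((if i ∈ S then h * (ρ i j:ℝ) else 0) - (S.card:ℝ) * ((lam i:ℝ) * (ρ i j:ℝ))) := by
        apply Finset.sum_congr rfl; intro i _
        by_cases hi : i ∈ S <;> simp [hu, hi] <;> ring
      rw [this, Finset.sum_sub_distrib, hsum_ite, ← Finset.mul_sum, ← Finset.mul_sum,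
        hSzero j, hrelj j]
      ring
    have hz := haff' Finset.univ u husum huvec ⟨0, by omega⟩ (Finset.mem_univ _)
    have h0S : (⟨0, by omega⟩ : Fin (n+1)) ∉ S := by
      rw [hS, Finset.mem_Ici, Fin.le_def]; show ¬ k.val ≤ 0; omega
    rw [hu] at hz
    simp only [h0S, if_neg, not_false_iff, zero_sub, neg_eq_zero] at hz
    have hc1 : 1 ≤ S.card := Finset.card_pos.mpr ⟨k, Finset.mem_Ici.mpr le_rfl⟩
    have hc1R : (1:ℝ) ≤ (S.card:ℝ) := by exact_mod_cast hc1
    have := hpos' ⟨0, by omega⟩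
    nlinarith [mul_pos (lt_of_lt_of_le one_pos hc1R) this]
  · -- case x = ρ t : then ρ t + ∑_{i ∈ S} ρ i = 0
    have hSzero : ∀ j, (ρ t j : ℝ) + ∑ i ∈ S, (ρ i j : ℝ) = 0 := by
      intro j
      have h1 : (-∑ i ∈ S, ρ i j) = ρ t j := congrFun ht j
      have : (ρ t j : ℤ) + ∑ i ∈ S, ρ i j = 0 := by omega
      exact_mod_cast this
    set u : Fin (n+1) → ℝ := fun i =>
      (if i ∈ S then h else 0) + (if i = t then h else 0) - M * lam i with hu
    have hsum_itet : ∀ (f : Fin (n+1) → ℝ),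
        ∑ i, (if i = t then f i else 0) = f t := by
      intro f
      rw [Finset.sum_ite_eq' Finset.univ t f]
      simp
    have husum : ∑ i, u i = 0 := by
      rw [hu]
      simp only [Finset.sum_sub_distrib, Finset.sum_add_distrib]
      rw [hsum_ite, hsum_itet, Finset.sum_const, nsmul_eq_mul, ← Finset.mul_sum, ← hh]
      rw [hM]
      nlinarith [hcard]
    have huvec : ∑ i, u i • (fun i => coeVec (ρ i)) i = 0 := by
      funext j
      rw [Finset.sum_apply]
      simp only [Pi.smul_apply, smul_eq_mul, coeVec, Pi.zero_apply]
      have : ∑ i, u i * (ρ i j : ℝ)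
          = ∑ i, ((if i ∈ S then h * (ρ i j:ℝ) else 0) + (if i = t then h * (ρ i j:ℝ) else 0)
              - M * ((lam i:ℝ) * (ρ i j:ℝ))) := by
        apply Finset.sum_congr rfl; intro i _
        by_cases hit : i = t
        · subst hit
          by_cases hi : i ∈ S <;> simp [hu, hi] <;> ring
        · by_cases hi : i ∈ S <;> simp [hu, hi, hit] <;> ring
      rw [this]
      simp only [Finset.sum_sub_distrib, Finset.sum_add_distrib]
      rw [hsum_ite, hsum_itet, ← Finset.mul_sum, ← Finset.mul_sum, hrelj j]
      have := hSzero j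
      nlinarith [hSzero j]
    -- pick an index i0 < k with i0 ≠ t
    set i0 : Fin (n+1) := if t.val = 0 then ⟨1, by omega⟩ else ⟨0, by omega⟩ with hi0
    have hi0t : i0 ≠ t := by
      apply Fin.ne_of_val_ne
      rw [hi0]
      by_cases h0 : t.val = 0 <;> simp [h0] <;> omega
    have hi0S : i0 ∉ S := by
      rw [hS, Finset.mem_Ici, Fin.le_def, hi0]
      by_cases h0 : t.val = 0 <;> simp only [h0, ↓reduceIte, Fin.val_mk] <;> omega
    have hz := haff' Finset.univ u husum huvec i0 (Finset.mem_univ _)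
    rw [hu] at hz
    simp only [hi0S, hi0t, if_neg, not_false_iff, zero_add, zero_sub, neg_eq_zero] at hz
    have := hpos' i0
    nlinarith
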